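/- Let ξ > 0, c > 0, and let α : [1,∞) → ℝ be measurable, integrable on compact subintervals, with α(t) → 0 as t → ∞. Define Q(u) = (1−u)^{−ξ} · c · exp(∫_1^{1/(1−u)} α(t)/t dt) for u ∈ (0,1). Then for every sequence τ_n ∈ (0,1) with τ_n → 1, (1−τ_n)^{−1} · ∫_{τ_n}^1 (Q(τ_n)/Q(u))² du → 1/(1+2ξ) as n → ∞. -/

import Mathlib

open MeasureTheory Real Filter


noncomputable def hfun (α : ℝ → ℝ) : ℝ → ℝ := fun t => α t * t⁻¹

lemma hfun_intable (α : ℝ → ℝ) (hint : ∀ a b : ℝ, 1 ≤ a → IntervalIntegrable α volume a b)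
    {a b : ℝ} (ha : 1 ≤ a) (hb : 1 ≤ b) :
    IntervalIntegrable (hfun α) volume a b := by
  have h1 : ∀ t ∈ Set.uIcc a b, (0:ℝ) < t := by
    intro t ht
    have h2 : min a b ≤ t := ht.1
    have h3 : (1:ℝ) ≤ min a b := le_min ha hb
    linarith
  exact (hint a b ha).mul_continuousOn
    (continuousOn_inv₀.mono (fun t ht => ne_of_gt (h1 t ht)))

noncomputable def gfun (α : ℝ → ℝ) : ℝ → ℝ := Set.indicator (Set.Ici 1) (hfun α)

lemma gfun_intable (α : ℝ → ℝ)
    (hint : ∀ a b : ℝ, 1 ≤ a → IntervalIntegrable α volume a b)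
    (a b : ℝ) : IntervalIntegrable (gfun α) volume a b := by
  rw [intervalIntegrable_iff]
  rw [gfun, IntegrableOn, integrable_indicator_iff measurableSet_Ici,
    IntegrableOn, Measure.restrict_restrict measurableSet_Ici]
  have hI : IntegrableOn (hfun α) (Set.uIcc 1 (max 1 (max a b))) volume := by
    have h := hfun_intable α hint (le_refl 1) (le_max_left 1 (max a b))
    rwa [intervalIntegrable_iff_integrableOn_Icc_of_le (le_max_left _ _),
      ← Set.uIcc_of_le (le_max_left _ _)] at h
  refine hI.mono_set ?_
  intro t ht
  rcases ht with ⟨ht2, ht1⟩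
  rw [Set.uIcc_of_le (le_max_left _ _)]
  exact ⟨ht2, le_trans ht1.2 (le_max_right 1 (max a b))⟩

noncomputable def Ffun (α : ℝ → ℝ) : ℝ → ℝ := fun x => ∫ t in (1:ℝ)..x, gfun α t

lemma Ffun_cont (α : ℝ → ℝ)
    (hint : ∀ a b : ℝ, 1 ≤ a → IntervalIntegrable α volume a b) :
    Continuous (Ffun α) :=
  intervalIntegral.continuous_primitive (fun a b => gfun_intable α hint a b) 1

lemma Ffun_eq (α : ℝ → ℝ)
    {x : ℝ} (hx : 1 ≤ x) :
    Ffun α x = ∫ t in (1:ℝ)..x, α t / t := by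
  rw [Ffun]
  apply intervalIntegral.integral_congr
  intro t ht
  rw [Set.uIcc_of_le hx] at ht
  rw [gfun, Set.indicator_of_mem (Set.mem_Ici.2 ht.1), hfun]
  simp [div_eq_mul_inv]

/-- The difference of primitive values is the interval integral. -/
lemma Ffun_sub (α : ℝ → ℝ)
    (hint : ∀ a b : ℝ, 1 ≤ a → IntervalIntegrable α volume a b)
    {A B : ℝ} (hA : 1 ≤ A) (hB : 1 ≤ B) :
    Ffun α B - Ffun α A = ∫ t in A..B, α t * t⁻¹ := by
  rw [Ffun_eq α hA, Ffun_eq α hB]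
  have h1 : ∀ x:ℝ, 1 ≤ x → (∫ t in (1:ℝ)..x, α t / t) = ∫ t in (1:ℝ)..x, α t * t⁻¹ := by
    intro x hx
    apply intervalIntegral.integral_congr
    intro t ht
    simp [div_eq_mul_inv]
  rw [h1 A hA, h1 B hB]
  exact intervalIntegral.integral_interval_sub_left
    (hfun_intable α hint le_rfl hB) (hfun_intable α hint le_rfl hA)

lemma int_bound (α : ℝ → ℝ) (ε T A B : ℝ)
    (hint : ∀ a b : ℝ, 1 ≤ a → IntervalIntegrable α volume a b)
    (hT1 : 1 ≤ T) (hTA : T ≤ A) (hAB : A ≤ B)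
    (hα : ∀ t : ℝ, T ≤ t → |α t| ≤ ε) :
    |∫ t in A..B, α t * t⁻¹| ≤ ε * Real.log (B / A) := by
  have hA1 : (1:ℝ) ≤ A := le_trans hT1 hTA
  have hB1 : (1:ℝ) ≤ B := le_trans hA1 hAB
  have h0A : (0:ℝ) < A := lt_of_lt_of_le one_pos hA1
  calc |∫ t in A..B, α t * t⁻¹| ≤ ∫ t in A..B, |α t * t⁻¹| :=
        intervalIntegral.abs_integral_le_integral_abs hAB
    _ ≤ ∫ t in A..B, ε * t⁻¹ := by
        apply intervalIntegral.integral_mono_on hAB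
        · exact (hfun_intable α hint hA1 hB1).abs
        · apply ContinuousOn.intervalIntegrable
          apply ContinuousOn.mul continuousOn_const
          apply continuousOn_inv₀.mono
          intro t ht
          rw [Set.uIcc_of_le hAB] at ht
          exact ne_of_gt (lt_of_lt_of_le h0A ht.1)
        · intro t ht
          have h0t : 0 < t := lt_of_lt_of_le h0A ht.1
          rw [abs_mul, abs_inv, abs_of_pos h0t]
          exact mul_le_mul_of_nonneg_right (hα t (le_trans hTA ht.1)) (by positivity)
    _ = ε * Real.log (B / A) := by
        rw [intervalIntegral.integral_const_mul, integral_inv]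
        rw [Set.uIcc_of_le hAB]
        intro h
        exact absurd h.1 (by linarith)

lemma rpow_integral (t0 p : ℝ) (ht0 : t0 ∈ Set.Ioo (0:ℝ) 1) (hp : 0 < p) :
    (1 - t0)⁻¹ * ∫ u in t0..1, ((1-u)/(1-t0)) ^ p = 1 / (1 + p) := by
  set y := 1 - t0 with hy
  have hy0 : 0 < y := by simp [hy]; linarith [ht0.2]
  have ht01 : t0 ≤ 1 := le_of_lt ht0.2
  have h1 : (∫ u in t0..1, ((1-u)/y) ^ p) = (∫ u in t0..1, (1-u) ^ p) / y ^ p := by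
    rw [← intervalIntegral.integral_div]
    apply intervalIntegral.integral_congr
    intro u hu
    rw [Set.uIcc_of_le ht01] at hu
    exact Real.div_rpow (by linarith [hu.2]) hy0.le p
  have h2 : (∫ u in t0..1, (1-u) ^ p) = ∫ x in (0:ℝ)..y, x ^ p := by
    have := intervalIntegral.integral_comp_sub_left (a := t0) (b := 1) (fun x => x ^ p) 1
    rw [this]
    norm_num
    rfl
  have h3 : (∫ x in (0:ℝ)..y, x ^ p) = y ^ (p+1) / (p+1) := by
    rw [integral_rpow (Or.inl (by linarith))]
    rw [Real.zero_rpow (by positivity)]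
    ring
  rw [h1, h2, h3]
  have hyp : y ^ p ≠ 0 := ne_of_gt (Real.rpow_pos_of_pos hy0 p)
  have hyp1 : y ^ (p+1) = y ^ p * y := by
    rw [Real.rpow_add hy0, Real.rpow_one]
  rw [hyp1]
  field_simp
  ring

lemma per_n_bound (ξ c ε : ℝ) (hξ : 0 < ξ) (hc : 0 < c) (hε : 0 < ε) (hεξ : ε < ξ)
    (α : ℝ → ℝ) (hmeas : Measurable α)
    (hint : ∀ a b : ℝ, 1 ≤ a → IntervalIntegrable α volume a b)
    (T : ℝ) (hT1 : 1 ≤ T) (hTα : ∀ t : ℝ, T ≤ t → |α t| ≤ ε)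
    (Q : ℝ → ℝ)
    (hQ : ∀ u ∈ Set.Ioo (0:ℝ) 1,
      Q u = (1 - u) ^ (-ξ) * c *
        Real.exp (∫ t in (1:ℝ)..(1 / (1 - u)), α t / t))
    (t0 : ℝ) (ht0 : t0 ∈ Set.Ioo (0:ℝ) 1) (hTt0 : T ≤ (1 - t0)⁻¹) :
    (1 - t0)⁻¹ * ∫ u in t0..1, (Q t0 / Q u) ^ 2 ∈
      Set.Icc (1/(1+(2*ξ+2*ε))) (1/(1+(2*ξ-2*ε))) := by
  have ht00 := ht0.1
  have ht01 := ht0.2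
  set y := 1 - t0 with hy
  have hy0 : 0 < y := by simp only [hy]; linarith
  have hy1 : y < 1 := by simp only [hy]; linarith
  have hA1 : (1:ℝ) ≤ y⁻¹ := by
    have h := inv_mul_cancel₀ hy0.ne'
    nlinarith [inv_pos.2 hy0]
  have hTA : T ≤ y⁻¹ := hTt0
  -- the explicit version of the squared ratio
  set G : ℝ → ℝ := fun u =>
    ((1-u)/y) ^ (2*ξ) * Real.exp (-2 * (Ffun α (1-u)⁻¹ - Ffun α y⁻¹)) with hG
  -- equality with the squared ratio on Ioo t0 1
  have hQG : ∀ u ∈ Set.Ioo t0 1, (Q t0 / Q u) ^ 2 = G u := by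
    intro u hu
    have hu0 : u ∈ Set.Ioo (0:ℝ) 1 := ⟨lt_trans ht00 hu.1, hu.2⟩
    set x := 1 - u with hx
    have hx0 : 0 < x := by simp only [hx]; linarith [hu.2]
    have hxy : x < y := by simp only [hx, hy]; linarith [hu.1]
    have hB1 : (1:ℝ) ≤ x⁻¹ := by
      have h := inv_mul_cancel₀ hx0.ne'
      nlinarith [inv_pos.2 hx0]
    have hone : ∀ z : ℝ, 0 < z → (1:ℝ) / z = z⁻¹ := fun z hz => one_div z
    rw [hQ t0 ht0, hQ u hu0]
    rw [← hy, ← hx, one_div, one_div]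
    rw [← Ffun_eq α hA1, ← Ffun_eq α hB1]
    have hc' : c ≠ 0 := hc.ne'
    have hyx : y ^ (-ξ) = (y ^ ξ)⁻¹ := Real.rpow_neg hy0.le ξ
    have hxx : x ^ (-ξ) = (x ^ ξ)⁻¹ := Real.rpow_neg hx0.le ξ
    have hyp : (0:ℝ) < y ^ ξ := Real.rpow_pos_of_pos hy0 ξ
    have hxp : (0:ℝ) < x ^ ξ := Real.rpow_pos_of_pos hx0 ξ
    have h1 : y ^ (-ξ) * c * Real.exp (Ffun α y⁻¹) / (x ^ (-ξ) * c * Real.exp (Ffun α x⁻¹))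
        = (x/y) ^ ξ * Real.exp (-(Ffun α x⁻¹ - Ffun α y⁻¹)) := by
      rw [hyx, hxx, Real.div_rpow hx0.le hy0.le]
      rw [show -(Ffun α x⁻¹ - Ffun α y⁻¹) = Ffun α y⁻¹ - Ffun α x⁻¹ by ring,
        Real.exp_sub]
      have e1 := (Real.exp_pos (Ffun α y⁻¹)).ne'
      have e2 := (Real.exp_pos (Ffun α x⁻¹)).ne'
      field_simp
    rw [h1]
    have hxyp : (0:ℝ) < x / y := div_pos hx0 hy0
    calc ((x/y) ^ ξ * Real.exp (-(Ffun α x⁻¹ - Ffun α y⁻¹))) ^ 2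
        = ((x/y) ^ ξ * (x/y) ^ ξ) *
          (Real.exp (-(Ffun α x⁻¹ - Ffun α y⁻¹)) * Real.exp (-(Ffun α x⁻¹ - Ffun α y⁻¹))) := by
          ring
      _ = (x/y) ^ (ξ + ξ) * Real.exp (-(Ffun α x⁻¹ - Ffun α y⁻¹) + -(Ffun α x⁻¹ - Ffun α y⁻¹)) := by
          rw [Real.rpow_add hxyp, Real.exp_add]
      _ = G u := by
          simp only [hG, ← hx]
          rw [show ξ + ξ = 2*ξ by ring, show ∀ d : ℝ, -d + -d = -2*(d) from fun d => by ring]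
  -- pointwise bounds for G on Icc t0 1
  have hGbound : ∀ u ∈ Set.Icc t0 1,
      ((1-u)/y) ^ (2*ξ+2*ε) ≤ G u ∧ G u ≤ ((1-u)/y) ^ (2*ξ-2*ε) := by
    intro u hu
    rcases eq_or_lt_of_le hu.2 with h1 | h1
    · -- u = 1
      have : (1:ℝ) - u = 0 := by rw [← h1]; ring
      simp only [hG, this]
      rw [zero_div, Real.zero_rpow (by positivity), Real.zero_rpow (by positivity),
        Real.zero_rpow (by nlinarith), zero_mul]
      exact ⟨le_refl 0, le_refl 0⟩
    · set x := 1 - u with hx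
      have hx0 : 0 < x := by simp only [hx]; linarith
      have hxy : x ≤ y := by simp only [hx, hy]; linarith [hu.1]
      have hB1 : (1:ℝ) ≤ x⁻¹ := by
        have h := inv_mul_cancel₀ hx0.ne'
        nlinarith [inv_pos.2 hx0]
      have hAB : y⁻¹ ≤ x⁻¹ := by
        apply inv_anti₀ hx0 hxy
      have hr0 : 0 < x / y := div_pos hx0 hy0
      have hr1 : x / y ≤ 1 := (div_le_one hy0).2 hxy
      -- bound the integral
      have hsub := Ffun_sub α hint hA1 hB1
      have hJ := int_bound α ε T y⁻¹ x⁻¹ hint hT1 hTA hAB hTα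
      rw [← hsub] at hJ
      have hBA : x⁻¹ / y⁻¹ = y / x := by field_simp
      rw [hBA] at hJ
      have hlog : Real.log (y / x) = Real.log ((x/y)⁻¹) := by rw [inv_div]
      set d := Ffun α x⁻¹ - Ffun α y⁻¹ with hd
      have hub : Real.exp (-2 * d) ≤ (x/y) ^ (-(2*ε)) := by
        have h2 : -2 * d ≤ 2 * ε * Real.log ((x/y)⁻¹) := by
          rw [← hlog]
          have := abs_le.1 hJ
          nlinarith [this.1]
        calc Real.exp (-2*d) ≤ Real.exp (2 * ε * Real.log ((x/y)⁻¹)) := Real.exp_le_exp.2 h2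
          _ = ((x/y)⁻¹) ^ (2*ε) := by
              rw [Real.rpow_def_of_pos (inv_pos.2 hr0)]; ring_nf
          _ = (x/y) ^ (-(2*ε)) := by
              rw [Real.inv_rpow hr0.le, ← Real.rpow_neg hr0.le]
      have hlb : (x/y) ^ (2*ε) ≤ Real.exp (-2 * d) := by
        have h2 : 2 * ε * Real.log (x/y) ≤ -2 * d := by
          have := abs_le.1 hJ
          rw [hlog, Real.log_inv] at this
          nlinarith [this.2]
        calc (x/y) ^ (2*ε) = Real.exp (2 * ε * Real.log (x/y)) := by
              rw [Real.rpow_def_of_pos hr0]; ring_nf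
          _ ≤ Real.exp (-2*d) := Real.exp_le_exp.2 h2
      have hGu : G u = (x/y) ^ (2*ξ) * Real.exp (-2 * d) := by
        simp only [hG, ← hx, hd]
      have hrp : (0:ℝ) ≤ (x/y) ^ (2*ξ) := Real.rpow_nonneg hr0.le _
      constructor
      · rw [hGu, show 2*ξ+2*ε = 2*ξ + 2*ε by ring, Real.rpow_add hr0]
        exact mul_le_mul_of_nonneg_left hlb hrp
      · rw [hGu, show 2*ξ-2*ε = 2*ξ + -(2*ε) by ring, Real.rpow_add hr0]
        exact mul_le_mul_of_nonneg_left hub hrp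
  have ht01le : t0 ≤ 1 := ht01.le
  -- measurability of G
  have hGmeas : Measurable G := by
    apply Measurable.mul
    · exact Measurable.pow ((measurable_const.sub measurable_id).div_const y) measurable_const
    · apply Real.measurable_exp.comp
      apply Measurable.const_mul
      exact ((Ffun_cont α hint).measurable.comp
        (measurable_const.sub measurable_id).inv).sub measurable_const
  -- integrability of G
  have hGint : IntervalIntegrable G volume t0 1 := by
    rw [intervalIntegrable_iff_integrableOn_Ioc_of_le ht01le]
    apply Integrable.mono' (integrable_const (1:ℝ)) hGmeas.aestronglyMeasurable.restrict
    rw [ae_restrict_iff' measurableSet_Ioc]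
    apply ae_of_all
    intro u hu
    have hb := hGbound u ⟨hu.1.le, hu.2⟩
    have hbase0 : (0:ℝ) ≤ (1-u)/y := div_nonneg (by linarith [hu.2]) hy0.le
    have hg0 : 0 ≤ G u := le_trans (Real.rpow_nonneg hbase0 _) hb.1
    rw [Real.norm_eq_abs, abs_of_nonneg hg0]
    refine le_trans hb.2 (Real.rpow_le_one hbase0 ?_ (by linarith))
    rw [div_le_one hy0]
    simp only [hy]
    linarith [hu.1]
  -- integrability of the bounds
  have hbint : ∀ p : ℝ, 0 ≤ p → IntervalIntegrable (fun u => ((1-u)/y) ^ p) volume t0 1 := by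
    intro p hp
    apply ContinuousOn.intervalIntegrable
    apply ContinuousOn.rpow_const
    · exact ((continuous_const.sub continuous_id).div_const y).continuousOn
    · exact fun u _ => Or.inr hp
  -- the integral of the ratio equals the integral of G
  have hIcong : (∫ u in t0..1, (Q t0 / Q u) ^ 2) = ∫ u in t0..1, G u := by
    apply intervalIntegral.integral_congr_ae
    have h1 : ∀ᵐ (x:ℝ) ∂volume, x ≠ (1:ℝ) := by
      have h2 : volume ({(1:ℝ)} : Set ℝ) = 0 := measure_singleton _
      rw [ae_iff]
      convert h2 using 2
      ext x
      simp
    filter_upwards [h1] with u hu1 huI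
    rw [Set.uIoc_of_le ht01le] at huI
    exact hQG u ⟨huI.1, lt_of_le_of_ne huI.2 hu1⟩
  have hεp : (0:ℝ) < 2*ξ+2*ε := by linarith
  have hεm : (0:ℝ) < 2*ξ-2*ε := by linarith
  have hlow : (∫ u in t0..1, ((1-u)/y) ^ (2*ξ+2*ε)) ≤ ∫ u in t0..1, G u :=
    intervalIntegral.integral_mono_on ht01le (hbint _ hεp.le) hGint
      (fun u hu => (hGbound u hu).1)
  have hup : (∫ u in t0..1, G u) ≤ ∫ u in t0..1, ((1-u)/y) ^ (2*ξ-2*ε) :=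
    intervalIntegral.integral_mono_on ht01le hGint (hbint _ hεm.le)
      (fun u hu => (hGbound u hu).2)
  rw [hIcong, Set.mem_Icc]
  have hyinv : (0:ℝ) ≤ y⁻¹ := inv_nonneg.2 hy0.le
  have e1 := rpow_integral t0 (2*ξ+2*ε) ht0 hεp
  have e2 := rpow_integral t0 (2*ξ-2*ε) ht0 hεm
  rw [← hy] at e1 e2
  constructor
  · rw [← e1]
    exact mul_le_mul_of_nonneg_left hlow hyinv
  · rw [← e2]
    exact mul_le_mul_of_nonneg_left hup hyinv

/-- Population version of the squared-ratio statistic `g̃` at the approximate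
Grimshaw solution: `(1−τ_n)⁻¹ ∫_{τ_n}^1 (Q(τ_n)/Q(u))² du → 1/(1+2ξ)` for a
heavy-tailed Karamata quantile function with extreme value index `ξ > 0`. -/
theorem g_tilde_population_limit
    (ξ c : ℝ) (hξ : 0 < ξ) (hc : 0 < c)
    (α : ℝ → ℝ) (hmeas : Measurable α)
    (hint : ∀ a b : ℝ, 1 ≤ a → IntervalIntegrable α volume a b)
    (hα : Filter.Tendsto α Filter.atTop (nhds 0))
    (Q : ℝ → ℝ)
    (hQ : ∀ u ∈ Set.Ioo (0:ℝ) 1,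
      Q u = (1 - u) ^ (-ξ) * c *
        Real.exp (∫ t in (1:ℝ)..(1 / (1 - u)), α t / t))
    (τ : ℕ → ℝ) (hτ : ∀ n, τ n ∈ Set.Ioo (0:ℝ) 1)
    (hτ1 : Filter.Tendsto τ Filter.atTop (nhds 1)) :
    Filter.Tendsto
      (fun n => (1 - τ n)⁻¹ * ∫ u in (τ n)..1, (Q (τ n) / Q u) ^ 2)
      Filter.atTop (nhds (1 / (1 + 2 * ξ))) := by
  have key : ∀ ε : ℝ, 0 < ε → ε < ξ → ∀ᶠ n in atTop,
      (1 - τ n)⁻¹ * ∫ u in (τ n)..1, (Q (τ n) / Q u) ^ 2 ∈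
        Set.Icc (1/(1+(2*ξ+2*ε))) (1/(1+(2*ξ-2*ε))) := by
    intro ε hε0 hεξ
    -- get the threshold T
    have h1 : ∀ᶠ t in atTop, |α t| ≤ ε := by
      have h2 := Metric.tendsto_nhds.1 hα ε hε0
      filter_upwards [h2] with t ht
      rw [Real.dist_eq, sub_zero] at ht
      exact ht.le
    obtain ⟨T0, hT0⟩ := eventually_atTop.1 h1
    set T := max T0 1 with hT
    have hT1 : (1:ℝ) ≤ T := le_max_right _ _
    have hT0' : (0:ℝ) < T := lt_of_lt_of_le one_pos hT1
    have hTα : ∀ t : ℝ, T ≤ t → |α t| ≤ ε := fun t ht =>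
      hT0 t (le_trans (le_max_left _ _) ht)
    -- eventually T ≤ (1 - τ n)⁻¹
    have h3 : Tendsto (fun n => 1 - τ n) atTop (nhds 0) := by
      have := (tendsto_const_nhds (x := (1:ℝ)) (f := atTop)).sub hτ1
      simpa using this
    have h4 : ∀ᶠ n in atTop, 1 - τ n < T⁻¹ :=
      (tendsto_order.1 h3).2 T⁻¹ (by positivity)
    filter_upwards [h4] with n hn
    have hy0 : 0 < 1 - τ n := by have := (hτ n).2; linarith
    have h5 : T ≤ (1 - τ n)⁻¹ := by
      rw [← inv_inv T]
      exact inv_anti₀ hy0 hn.le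
    exact per_n_bound ξ c ε hξ hc hε0 hεξ α hmeas hint T hT1 hTα Q hQ (τ n) (hτ n) h5
  have hpos : (0:ℝ) < 1 + 2*ξ := by linarith
  rw [tendsto_order]
  constructor
  · -- lower bound
    intro b hb
    rcases le_or_gt b 0 with hb0 | hb0
    · filter_upwards [key (ξ/2) (by linarith) (by linarith)] with n hn
      have h7 := hn.1
      have h8 : (0:ℝ) < 1/(1+(2*ξ+2*(ξ/2))) := by positivity
      linarith
    · have hd : 1 + 2*ξ < 1/b := by
        have h9 := (lt_div_iff₀ hpos).1 hb
        rw [lt_div_iff₀ hb0]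
        nlinarith
      set ε := min (ξ/2) ((1/b - (1+2*ξ))/4) with hε
      have hε0 : 0 < ε := lt_min (by linarith) (by linarith)
      have hεξ : ε < ξ := lt_of_le_of_lt (min_le_left _ _) (by linarith)
      filter_upwards [key ε hε0 hεξ] with n hn
      have h7 := hn.1
      have h8 : 1+(2*ξ+2*ε) < 1/b := by
        have h10 : ε ≤ (1/b - (1+2*ξ))/4 := min_le_right _ _
        linarith
      have h9 : b < 1/(1+(2*ξ+2*ε)) := by
        rw [lt_div_iff₀ (by linarith : (0:ℝ) < 1+(2*ξ+2*ε))]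
        calc b * (1+(2*ξ+2*ε)) < b * (1/b) := mul_lt_mul_of_pos_left h8 hb0
          _ = 1 := by field_simp
      linarith
  · -- upper bound
    intro b hb
    have hb0 : 0 < b := lt_trans (by positivity) hb
    have hd : 1/b < 1 + 2*ξ := by
      have h9 := (div_lt_iff₀ hpos).1 hb
      rw [div_lt_iff₀ hb0]
      nlinarith
    set ε := min (ξ/2) ((1+2*ξ - 1/b)/4) with hε
    have hε0 : 0 < ε := lt_min (by linarith) (by linarith)
    have hεξ : ε < ξ := lt_of_le_of_lt (min_le_left _ _) (by linarith)
    filter_upwards [key ε hε0 hεξ] with n hn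
    have h7 := hn.2
    have h8 : 1/b < 1+(2*ξ-2*ε) := by
      have h10 : ε ≤ (1+2*ξ - 1/b)/4 := min_le_right _ _
      linarith
    have hq : (0:ℝ) < 1+(2*ξ-2*ε) := by
      have : (0:ℝ) < 1/b := by positivity
      linarith
    have h9 : 1/(1+(2*ξ-2*ε)) < b := by
      rw [div_lt_iff₀ hq]
      have h11 : b * (1/b) < b * (1+(2*ξ-2*ε)) := mul_lt_mul_of_pos_left h8 hb0
      have h12 : b * (1/b) = 1 := by field_simp
      linarith
    linarith
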